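/- If n is an odd positive integer, then Φ(n) ≤ 6n, where Φ(n) := max{m : φ(m) divides 2n}. -/

import Mathlib

lemma four_dvd_tot {p r m : ℕ} (hp : p.Prime) (hr : r.Prime)
    (hp2 : p ≠ 2) (hr2 : r ≠ 2) (hne : p ≠ r) (hpm : p ∣ m) (hrm : r ∣ m) :
    4 ∣ m.totient := by
  have hcop : Nat.Coprime p r := (Nat.coprime_primes hp hr).2 hne
  have hdvd : p * r ∣ m := hcop.mul_dvd_of_dvd_of_dvd hpm hrm
  have h1 : (p*r).totient ∣ m.totient := Nat.totient_dvd_of_dvd hdvd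
  rw [Nat.totient_mul hcop, Nat.totient_prime hp, Nat.totient_prime hr] at h1
  obtain ⟨x, hx⟩ := hp.even_sub_one hp2
  obtain ⟨y, hy⟩ := hr.even_sub_one hr2
  refine dvd_trans ⟨x*y, ?_⟩ h1
  rw [hx, hy]; ring

lemma le_three_totient (m : ℕ) (hm : 0 < m) (h4 : ¬ 4 ∣ m.totient) :
    m ≤ 3 * m.totient := by
  set a := m.factorization 2 with ha
  set q := m / 2 ^ a with hqdef
  have hqpos : 0 < q := Nat.ordCompl_pos 2 hm.ne'
  have hmq : 2 ^ a * q = m := Nat.ordProj_mul_ordCompl_eq_self m 2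
  have hq2 : ¬ 2 ∣ q := Nat.not_dvd_ordCompl Nat.prime_two hm.ne'
  have hcop : Nat.Coprime (2 ^ a) q :=
    Nat.Coprime.pow_left a ((Nat.Prime.coprime_iff_not_dvd Nat.prime_two).2 hq2)
  have htot : m.totient = ((2:ℕ) ^ a).totient * q.totient := by
    rw [← hmq, Nat.totient_mul hcop]
  have ha2 : a ≤ 2 := by
    by_contra h
    push_neg at h
    have h8 : (8:ℕ) ∣ m := by
      rw [← hmq]
      exact dvd_mul_of_dvd_left (by exact pow_dvd_pow 2 h : (2:ℕ)^3 ∣ 2^a) q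
    have h8' : (8:ℕ).totient ∣ m.totient := Nat.totient_dvd_of_dvd h8
    rw [show (8:ℕ).totient = 4 from by decide] at h8'
    exact h4 h8'
  rcases eq_or_lt_of_le (show 1 ≤ q from hqpos) with hq1 | hq1
  · -- q = 1, m = 2^a, a ≤ 2
    have hm1 : m = 2 ^ a := by rw [← hmq, ← hq1]; exact mul_one _
    have ha' : a = 0 ∨ a = 1 ∨ a = 2 := by omega
    rcases ha' with h | h | h <;> rw [h] at hm1 <;> norm_num at hm1 <;>
      rw [hm1] <;> decide
  · -- q > 1
    set p := q.minFac with hpdef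
    have hp : p.Prime := Nat.minFac_prime (by omega)
    have hpq : p ∣ q := Nat.minFac_dvd q
    have hp2 : p ≠ 2 := by rintro h; rw [← h] at hq2; exact hq2 hpq
    have hp3 : 3 ≤ p := by
      rcases hp.two_le.lt_or_eq with h | h; omega
      exact absurd h.symm hp2
    set b := q.factorization p with hbdef
    set r := q / p ^ b with hrdef
    have hrq : p ^ b * r = q := Nat.ordProj_mul_ordCompl_eq_self q p
    have hpr : ¬ p ∣ r := Nat.not_dvd_ordCompl hp hqpos.ne'
    have hb1 : 1 ≤ b := hp.factorization_pos_of_dvd hqpos.ne' hpq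
    have hr1 : r = 1 := by
      by_contra hr
      set s := r.minFac with hsdef
      have hs : s.Prime := Nat.minFac_prime hr
      have hsr : s ∣ r := Nat.minFac_dvd r
      have hsq : s ∣ q := hsr.trans ⟨p ^ b, by rw [← hrq]; ring⟩
      have hs2 : s ≠ 2 := by rintro h; rw [← h] at hq2; exact hq2 hsq
      have hsp : p ≠ s := by rintro h; rw [h] at hpr; exact hpr hsr
      have hqm : q ∣ m := ⟨2 ^ a, by rw [← hmq]; ring⟩
      exact h4 (four_dvd_tot hp hs hp2 hs2 hsp (hpq.trans hqm) (hsq.trans hqm))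
    have hqp : q = p ^ b := by rw [← hrq, hr1, mul_one]
    have ha1 : a ≤ 1 := by
      by_contra h
      push_neg at h
      have h4m : (4:ℕ) ∣ m := by
        rw [← hmq]
        exact dvd_mul_of_dvd_left (by exact pow_dvd_pow 2 h : (2:ℕ)^2 ∣ 2^a) q
      have hpm : p ∣ m := hpq.trans ⟨2 ^ a, by rw [← hmq]; ring⟩
      have hcop4 : Nat.Coprime 4 p := by
        rw [Nat.coprime_comm]
        exact Nat.Coprime.pow_right 2 ((Nat.Prime.coprime_iff_not_dvd hp).2
          (fun hd => hp2 ((Nat.prime_dvd_prime_iff_eq hp Nat.prime_two).1 hd)))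
      have h4pm : 4 * p ∣ m := hcop4.mul_dvd_of_dvd_of_dvd h4m hpm
      have hdt : (4 * p).totient ∣ m.totient := Nat.totient_dvd_of_dvd h4pm
      rw [Nat.totient_mul hcop4, show (4:ℕ).totient = 2 from by decide,
        Nat.totient_prime hp] at hdt
      obtain ⟨x, hx⟩ := hp.even_sub_one hp2
      exact h4 (dvd_trans ⟨x, by rw [hx]; ring⟩ hdt)
    -- now m = 2^a * p^b with a ≤ 1
    have htq : q.totient = p ^ (b - 1) * (p - 1) := by
      rw [hqp, Nat.totient_prime_pow hp hb1]
    have hmle : m ≤ 2 * p ^ b := by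
      rw [← hmq, hqp]
      have : (2:ℕ) ^ a ≤ 2 := by interval_cases a <;> norm_num
      exact Nat.mul_le_mul_right _ this
    have htm : q.totient ≤ m.totient := by
      rw [htot]
      exact Nat.le_mul_of_pos_left _ (Nat.totient_pos.2 (by positivity))
    have hpow : p ^ b = p * p ^ (b - 1) := by
      rw [← pow_succ']
      congr 1
      omega
    have key : 2 * p ^ b ≤ 3 * q.totient := by
      rw [htq, hpow]
      obtain ⟨c, hc⟩ : ∃ c, p = c + 3 := ⟨p - 3, by omega⟩
      rw [hc]
      have h31 : c + 3 - 1 = c + 2 := by omega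
      rw [h31]
      have hP : (1:ℕ) ≤ (c + 3) ^ (b-1) := Nat.one_le_pow _ _ (by omega)
      nlinarith [hP]
    calc m ≤ 2 * p ^ b := hmle
      _ ≤ 3 * q.totient := key
      _ ≤ 3 * m.totient := Nat.mul_le_mul_left 3 htm


/-- `Φ(n)` is the largest positive integer `m` such that `φ(m)` divides `2n`. -/
noncomputable def Phi (n : ℕ) : ℕ := sSup {m : ℕ | 0 < m ∧ Nat.totient m ∣ 2 * n}

/-- If `n` is an odd positive integer, then `Φ(n) ≤ 6n`. -/
theorem Phi_le_of_odd (n : ℕ) (hn : 0 < n) (hodd : Odd n) : Phi n ≤ 6 * n := by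
  apply csSup_le ⟨1, by simp⟩
  rintro m ⟨hm, hdvd⟩
  have h2n : ¬ (4:ℕ) ∣ 2 * n := by
    obtain ⟨k, hk⟩ := hodd
    omega
  have h4 : ¬ 4 ∣ m.totient := fun h => h2n (h.trans hdvd)
  have h1 : m.totient ≤ 2 * n := Nat.le_of_dvd (by omega) hdvd
  have h2 := le_three_totient m hm h4
  omega
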